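/- arXiv:1209.3687 — 5 statements merged into one kernel-verified Lean document; each statement's English description precedes it below -/
import Mathlib

section
/- For every integer n ≥ 1, N ≥ 0, and complex z with z ≠ 1, the truncated series satisfies Σ_{j=0}^{N} C(n+j-1, j) z^j = (1-z)^{-n} - Σ_{j=1}^{n} C(N+n, N+j) z^{N+j} (1-z)^{-j}. -/
lemma key_poly (n : ℕ) (hn : 1 ≤ n) (z : ℂ) : ∀ N : ℕ,
    (∑ j ∈ Finset.range (N + 1), (Nat.choose (n + j - 1) j : ℂ) * z ^ j) * (1 - z) ^ n
      = 1 - ∑ i ∈ Finset.range n,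
          (Nat.choose (N + n) (N + 1 + i) : ℂ) * z ^ (N + 1 + i) * (1 - z) ^ (n - 1 - i) := by
  intro N
  induction N with
  | zero =>
    have h1 : ∑ m ∈ Finset.range (n+1), z ^ m * (1-z) ^ (n-m) * ((n.choose m : ℕ) : ℂ) = 1 := by
      rw [← add_pow]; norm_num
    rw [eq_sub_iff_add_eq]
    conv_rhs => rw [← h1,
      Finset.sum_range_succ' (fun m => z ^ m * (1 - z) ^ (n - m) * (n.choose m : ℂ)) n]
    simp only [Finset.sum_range_one, pow_zero, Nat.sub_zero, Nat.choose_zero_right,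
      Nat.cast_one, mul_one, one_mul, Nat.add_sub_cancel]
    rw [add_comm]
    congr 1
    apply Finset.sum_congr rfl
    intro i hi
    have h2 : n - (i + 1) = n - 1 - i := by omega
    have h3 : 0 + n = n := by omega
    have h4 : 0 + 1 + i = i + 1 := by omega
    rw [h2, h3, h4]
    ring
    simp
  | succ N ih =>
    rw [Finset.sum_range_succ, add_mul, ih]
    obtain ⟨m, rfl⟩ : ∃ m, n = m + 1 := ⟨n - 1, by omega⟩
    have hm : ∀ i : ℕ, m + 1 - 1 - i = m - i := fun i => by omega
    simp only [hm]
    set A : ℂ := ∑ i ∈ Finset.range (m+1),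
      (Nat.choose (N + (m+1)) (N + 1 + i) : ℂ) * z ^ (N + 1 + i) * (1 - z) ^ (m - i) with hA
    have e1 : ∑ i ∈ Finset.range (m+1),
        (Nat.choose (N + 1 + (m+1)) (N + 1 + 1 + i) : ℂ) * z ^ (N + 1 + 1 + i) * (1 - z) ^ (m - i)
        = z * A + ∑ i ∈ Finset.range (m+1),
            (Nat.choose (N + (m+1)) (N + 1 + i + 1) : ℂ) * z ^ (N + 1 + i + 1) * (1 - z) ^ (m - i) := by
      rw [hA, Finset.mul_sum, ← Finset.sum_add_distrib]
      apply Finset.sum_congr rfl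
      intro i hi
      have hp : (N + 1 + (m+1)).choose (N + 1 + 1 + i)
          = (N + (m+1)).choose (N + 1 + i) + (N + (m+1)).choose (N + 1 + i + 1) := by
        rw [show N + 1 + (m+1) = (N + (m+1)) + 1 by omega,
          show N + 1 + 1 + i = (N + 1 + i) + 1 by omega, Nat.choose_succ_succ]
      rw [hp, show N + 1 + 1 + i = (N + 1 + i) + 1 by omega]
      push_cast
      rw [pow_succ]
      ring
    have e2 : ∑ i ∈ Finset.range (m+1),
        (Nat.choose (N + (m+1)) (N + 1 + i + 1) : ℂ) * z ^ (N + 1 + i + 1) * (1 - z) ^ (m - i)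
        = (1 - z) * (A - (Nat.choose (N + (m+1)) (N + 1) : ℂ) * z ^ (N + 1) * (1 - z) ^ m) := by
      rw [Finset.sum_range_succ, show (N + (m+1)).choose (N + 1 + m + 1) = 0 from
        Nat.choose_eq_zero_of_lt (by omega)]
      rw [hA, Finset.sum_range_succ'
        (fun i => (Nat.choose (N + (m+1)) (N + 1 + i) : ℂ) * z ^ (N + 1 + i) * (1 - z) ^ (m - i)) m]
      simp only [Nat.cast_zero, zero_mul, add_zero, Nat.sub_zero, Nat.add_zero]
      rw [add_sub_cancel_right, Finset.mul_sum]
      apply Finset.sum_congr rfl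
      intro i hi
      simp only [Finset.mem_range] at hi
      rw [show N + 1 + (i + 1) = N + 1 + i + 1 by omega,
        show m - i = (m - (i + 1)) + 1 by omega, pow_succ]
      ring
    rw [e1, e2]
    have hc : (Nat.choose (m + 1 + (N + 1) - 1) (N + 1) : ℂ)
        = (Nat.choose (N + (m+1)) (N + 1) : ℂ) := by
      norm_cast
      rw [show m + 1 + (N + 1) - 1 = N + (m + 1) by omega]
    rw [hc, show (m : ℕ) + 1 = m + 1 from rfl]
    rw [show (1 - z) ^ (m + 1) = (1 - z) ^ m * (1 - z) from pow_succ _ _]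
    ring

/-- Summation formula for the truncated n-th power geometric series. -/
theorem stmt_3 (n N : ℕ) (hn : 1 ≤ n) (z : ℂ) (hz : z ≠ 1) :
    ∑ j ∈ Finset.range (N + 1), (Nat.choose (n + j - 1) j : ℂ) * z ^ j =
      ((1 - z) ^ n)⁻¹ -
        ∑ j ∈ Finset.Icc 1 n,
          (Nat.choose (N + n) (N + j) : ℂ) * z ^ (N + j) * ((1 - z) ^ j)⁻¹ := by
  have hc0 : (1 : ℂ) - z ≠ 0 := sub_ne_zero.mpr (Ne.symm hz)
  have hcn : ((1 : ℂ) - z) ^ n ≠ 0 := pow_ne_zero _ hc0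
  have hIcc : ∑ j ∈ Finset.Icc 1 n,
      (Nat.choose (N + n) (N + j) : ℂ) * z ^ (N + j) * ((1 - z) ^ j)⁻¹
      = ∑ i ∈ Finset.range n,
        (Nat.choose (N + n) (N + (1 + i)) : ℂ) * z ^ (N + (1 + i)) * ((1 - z) ^ (1 + i))⁻¹ := by
    rw [← Finset.Ico_add_one_right_eq_Icc, Finset.sum_Ico_eq_sum_range]
    simp
  rw [hIcc]
  have hS : ∑ j ∈ Finset.range (N + 1), (Nat.choose (n + j - 1) j : ℂ) * z ^ j
      = (1 - ∑ i ∈ Finset.range n,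
          (Nat.choose (N + n) (N + 1 + i) : ℂ) * z ^ (N + 1 + i) * (1 - z) ^ (n - 1 - i))
        * (((1 - z) ^ n)⁻¹) := by
    rw [eq_mul_inv_iff_mul_eq₀ hcn]
    exact key_poly n hn z N
  rw [hS, sub_mul, one_mul, Finset.sum_mul]
  congr 1
  apply Finset.sum_congr rfl
  intro i hi
  simp only [Finset.mem_range] at hi
  have hinv : (((1 : ℂ) - z) ^ n)⁻¹ = (((1 - z) ^ (n - 1 - i))⁻¹) * (((1 - z) ^ (1 + i))⁻¹) := by
    rw [← mul_inv, ← pow_add, show n - 1 - i + (1 + i) = n from by omega]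
  have hne : ((1 : ℂ) - z) ^ (n - 1 - i) ≠ 0 := pow_ne_zero _ hc0
  rw [hinv, show N + (1 + i) = N + 1 + i by omega]
  field_simp
end

section
/- Let X be a Hilbert space, A, H ∈ L(X), and Γ_{k,A}[H] = Σ_{j=0}^{k} (-1)^j C(k,j) A^{*j} H A^j. Then for all integers k ≥ 1 and N ≥ 0, H = Σ_{j=0}^{N} C(k+j-1, j) A^{*j} Γ_{k,A}[H] A^j + Σ_{j=1}^{k} C(N+k, N+j) A^{*(N+j)} Γ_{k-j,A}[H] A^{N+j}. -/
open ContinuousLinearMap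

/-- `Γ_{k,A}[H] = Σ_{j=0}^k (-1)^j C(k,j) A^{*j} H A^j`. -/
noncomputable def Gamma {X : Type*} [NormedAddCommGroup X] [InnerProductSpace ℂ X]
    [CompleteSpace X] (A H : X →L[ℂ] X) (k : ℕ) : X →L[ℂ] X :=
  ∑ j ∈ Finset.range (k + 1),
    ((-1 : ℂ) ^ j * (Nat.choose k j : ℂ)) • (((adjoint A) ^ j) ∘L H ∘L (A ^ j))

section Aux

lemma icc_sum_aux {M : Type*} [AddCommMonoid M] (k : ℕ) (f : ℕ → M) :
    ∑ j ∈ Finset.Icc 1 k, f j = ∑ i ∈ Finset.range k, f (1 + i) := by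
  rw [← Finset.Ico_add_one_right_eq_Icc, Finset.sum_Ico_eq_sum_range, Nat.add_sub_cancel]

/-- The scalar identity
`1 = Σ_{j=0}^N C(k+j-1,j) z^j (1-z)^k + Σ_{j=1}^k C(N+k,N+j) z^{N+j} (1-z)^{k-j}`. -/
lemma scalar_id_aux {R : Type*} [CommRing R] (z : R) (k : ℕ) (hk : 1 ≤ k) (N : ℕ) :
    (1 : R) =
      (∑ j ∈ Finset.range (N + 1), Nat.choose (k + j - 1) j • (z ^ j * (1 - z) ^ k)) +
      ∑ j ∈ Finset.Icc 1 k, Nat.choose (N + k) (N + j) • (z ^ (N + j) * (1 - z) ^ (k - j)) := by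
  obtain ⟨m, rfl⟩ : ∃ m, k = m + 1 := ⟨k - 1, (Nat.succ_pred_eq_of_pos hk).symm⟩
  induction N with
  | zero =>
      have h := add_pow z (1 - z) (m + 1)
      rw [add_sub_cancel, one_pow, Finset.sum_range_succ'] at h
      rw [Finset.sum_range_one, icc_sum_aux]
      simp only [pow_zero, one_mul, Nat.choose_zero_right, one_smul, zero_add,
        Nat.sub_zero, Nat.add_sub_cancel, Nat.cast_one, mul_one] at h ⊢
      conv_lhs => rw [h]
      rw [add_comm]
      congr 1
      apply Finset.sum_congr rfl
      intro i _
      rw [nsmul_eq_mul, Nat.add_comm 1 i]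
      ring
  | succ N ih =>
      rw [Finset.sum_range_succ]
      have key : ∑ j ∈ Finset.Icc 1 (m+1),
            Nat.choose (N + (m+1)) (N + j) • (z ^ (N + j) * (1 - z) ^ (m+1 - j))
          = Nat.choose (N + (m+1)) (N + 1) • (z ^ (N + 1) * (1 - z) ^ (m+1)) +
            ∑ j ∈ Finset.Icc 1 (m+1),
              Nat.choose (N + 1 + (m+1)) (N + 1 + j) • (z ^ (N + 1 + j) * (1 - z) ^ (m+1 - j)) := by
        rw [icc_sum_aux, icc_sum_aux]
        have split : ∀ i ∈ Finset.range (m+1),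
            Nat.choose (N + (m+1)) (N + (1+i)) • (z ^ (N + (1+i)) * (1 - z) ^ (m+1 - (1+i)))
            = Nat.choose (N+m+1) (N+1+i) • (z ^ (N+1+i) * (1 - z) ^ ((m-i)+1))
              + Nat.choose (N+m+1) (N+1+i) • (z ^ ((N+1+i)+1) * (1 - z) ^ (m-i)) := by
          intro i hi
          rw [Finset.mem_range] at hi
          have h1 : N + (m+1) = N+m+1 := by omega
          have h2 : N + (1+i) = N+1+i := by omega
          have h3 : m+1 - (1+i) = m - i := by omega
          rw [h1, h2, h3, ← smul_add, pow_succ, pow_succ]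
          congr 1
          ring
        have split2 : ∀ i ∈ Finset.range (m+1),
            Nat.choose (N + 1 + (m+1)) (N + 1 + (1+i)) •
                (z ^ (N + 1 + (1+i)) * (1 - z) ^ (m+1 - (1+i)))
            = Nat.choose (N+m+1) (N+1+i) • (z ^ ((N+1+i)+1) * (1-z) ^ (m-i))
              + Nat.choose (N+m+1) ((N+1+i)+1) • (z ^ ((N+1+i)+1) * (1-z) ^ (m-i)) := by
          intro i hi
          rw [Finset.mem_range] at hi
          have h1 : N+1+(m+1) = (N+m+1)+1 := by omega
          have h2 : N+1+(1+i) = (N+1+i)+1 := by omega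
          have h3 : m+1-(1+i) = m-i := by omega
          rw [h1, h2, h3, Nat.choose_succ_succ, add_smul]
        rw [Finset.sum_congr rfl split, Finset.sum_congr rfl split2,
          Finset.sum_add_distrib, Finset.sum_add_distrib]
        have hA : (∑ i ∈ Finset.range (m+1),
              Nat.choose (N+m+1) (N+1+i) • (z ^ (N+1+i) * (1 - z) ^ ((m-i)+1)))
            = Nat.choose (N + (m+1)) (N + 1) • (z ^ (N + 1) * (1 - z) ^ (m+1)) +
              ∑ i ∈ Finset.range (m+1),
                Nat.choose (N+m+1) ((N+1+i)+1) • (z ^ ((N+1+i)+1) * (1-z) ^ (m-i)) := by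
          rw [Finset.sum_range_succ', Finset.sum_range_succ]
          have hzero : Nat.choose (N+m+1) ((N+1+m)+1) •
              (z ^ ((N+1+m)+1) * (1-z) ^ (m-m)) = 0 := by
            rw [Nat.choose_eq_zero_of_lt (by omega), zero_smul]
          rw [hzero, add_zero]
          have h0 : Nat.choose (N+m+1) (N+1+0) • (z ^ (N+1+0) * (1-z) ^ (m-0+1))
              = Nat.choose (N + (m+1)) (N+1) • (z ^ (N+1) * (1-z) ^ (m+1)) := by
            norm_num [Nat.add_assoc]
          rw [h0, add_comm]
          congr 1
          rw [add_zero]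
          apply Finset.sum_congr rfl
          intro i hi
          rw [Finset.mem_range] at hi
          have h1 : N+1+(i+1) = N+1+i+1 := by omega
          have h2 : m-(i+1)+1 = m-i := by omega
          rw [h1, h2]
        rw [hA]
        abel
      calc (1:R) = _ := ih
        _ = _ := by
            rw [key]
            have : m + 1 + (N+1) - 1 = N + (m+1) := by omega
            rw [this]
            ring

variable {X : Type*} [NormedAddCommGroup X] [InnerProductSpace ℂ X] [CompleteSpace X]

/-- The conjugation map `T ↦ A* T A` as a linear endomorphism of `X →L[ℂ] X`. -/
noncomputable def conjMap (A : X →L[ℂ] X) : Module.End ℂ (X →L[ℂ] X) where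
  toFun T := adjoint A ∘L T ∘L A
  map_add' T S := by simp [add_comp, comp_add]
  map_smul' c T := by simp

lemma conjMap_pow (A : X →L[ℂ] X) (j : ℕ) (T : X →L[ℂ] X) :
    ((conjMap A) ^ j) T = ((adjoint A) ^ j) ∘L T ∘L (A ^ j) := by
  induction j generalizing T with
  | zero => simp [ContinuousLinearMap.one_def]
  | succ j ih =>
      rw [pow_succ, Module.End.mul_apply]
      have h : conjMap A T = adjoint A ∘L T ∘L A := rfl
      rw [h, ih, pow_succ' (adjoint A), pow_succ A]
      have cA : A.comp (A ^ j) = (A ^ j).comp A := ((Commute.refl A).pow_right j).eq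
      have cAd : (adjoint A ^ j).comp (adjoint A) = (adjoint A).comp (adjoint A ^ j) :=
        (((Commute.refl (adjoint A)).pow_right j).eq).symm
      simp only [ContinuousLinearMap.mul_def, comp_assoc, cA]
      rw [← comp_assoc, cAd, comp_assoc]

lemma gamma_eq (A H : X →L[ℂ] X) (k : ℕ) :
    ((1 - conjMap A) ^ k) H = Gamma A H k := by
  have hc : Commute (-(conjMap A)) (1 : Module.End ℂ (X →L[ℂ] X)) := Commute.one_right _
  rw [sub_eq_neg_add, hc.add_pow, LinearMap.sum_apply, Gamma]
  apply Finset.sum_congr rfl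
  intro i hi
  rw [one_pow, mul_one, ← neg_one_smul ℂ (conjMap A), smul_pow, smul_mul_assoc,
    LinearMap.smul_apply, Module.End.mul_apply, Module.End.natCast_apply,
    map_nsmul, conjMap_pow, smul_comm, ← Nat.cast_smul_eq_nsmul ℂ, smul_smul, mul_comm]

end Aux

/-- Reconstruction of `H` from `Γ_{k,A}[H]` and the lower-order remainders. -/
theorem stmt_7 {X : Type*} [NormedAddCommGroup X] [InnerProductSpace ℂ X] [CompleteSpace X]
    (A H : X →L[ℂ] X) (k N : ℕ) (hk : 1 ≤ k) :
    H =
      (∑ j ∈ Finset.range (N + 1),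
        (Nat.choose (k + j - 1) j : ℂ) • (((adjoint A) ^ j) ∘L Gamma A H k ∘L (A ^ j))) +
      ∑ j ∈ Finset.Icc 1 k,
        (Nat.choose (N + k) (N + j) : ℂ) •
          (((adjoint A) ^ (N + j)) ∘L Gamma A H (k - j) ∘L (A ^ (N + j))) := by
  have h2 := congrArg (fun p => (Polynomial.aeval (conjMap A) p) H)
    (scalar_id_aux (Polynomial.X : Polynomial ℂ) k hk N)
  simp only [map_one, map_add, map_sum, map_nsmul, map_mul, map_pow, map_sub,
    Polynomial.aeval_X, Module.End.one_apply, LinearMap.add_apply, LinearMap.sum_apply,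
    LinearMap.smul_apply, Module.End.mul_apply, gamma_eq, conjMap_pow] at h2
  simp only [Nat.cast_smul_eq_nsmul ℂ]
  exact h2
end

section
/- Let X be a Hilbert space, n ≥ 3 an integer, and H, A ∈ L(X) with H ≥ A*HA ≥ 0 and Γ_{n,A}[H] ≥ 0, where Γ_{k,A}[H] = Σ_{j=0}^{k} (-1)^j C(k,j) A^{*j} H A^j. Then Γ_{k,A}[H] ≥ 0 for all k = 1, …, n-1. -/
open ContinuousLinearMap

section ScalarLemmas

/-- If `v j - v (j+1) = u j` and `u j ≤ -c` for `j ≥ N` with `c > 0`,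
then `v` is eventually at least `K`. -/
lemma grow_aux (v u : ℕ → ℝ) (hd : ∀ j, v j - v (j+1) = u j) (c : ℝ) (hc : 0 < c)
    (N : ℕ) (hu : ∀ j, N ≤ j → u j ≤ -c) (K : ℝ) : ∃ M, ∀ j, M ≤ j → K ≤ v j := by
  have hstep : ∀ t : ℕ, v N + t * c ≤ v (N + t) := by
    intro t
    induction t with
    | zero => simp
    | succ t ih =>
      have h1 := hd (N + t)
      have h2 := hu (N + t) (by omega)
      have : N + (t + 1) = (N + t) + 1 := by omega
      rw [this]
      push_cast
      linarith
  obtain ⟨t, ht⟩ := exists_nat_ge ((K - v N) / c)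
  refine ⟨N + t, fun j hj => ?_⟩
  obtain ⟨s, rfl⟩ : ∃ s, j = (N + t) + s := ⟨j - (N + t), by omega⟩
  have hmono : ∀ s : ℕ, v (N + t) ≤ v ((N + t) + s) := by
    intro s
    induction s with
    | zero => simp
    | succ s ih =>
      have h1 := hd ((N + t) + s)
      have h2 := hu ((N + t) + s) (by omega)
      have : (N + t) + (s + 1) = ((N + t) + s) + 1 := by omega
      rw [this]
      linarith
  have hK : K ≤ v N + t * c := by
    rw [div_le_iff₀ hc] at ht
    linarith
  linarith [hstep t, hmono s]

/-- Downward induction step for the finite-difference squeeze. -/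
lemma step_aux (d : ℕ → ℕ → ℝ) (hrec : ∀ k m, d (k+1) m = d k m - d k (m+1))
    (h0 : ∀ m, 0 ≤ d 0 m) (h1 : ∀ m, 0 ≤ d 1 m)
    (k : ℕ) (hk : 1 ≤ k) (hnext : ∀ m, 0 ≤ d (k+1) m) : ∀ m, 0 ≤ d k m := by
  by_contra hcon
  push_neg at hcon
  obtain ⟨m, hm⟩ := hcon
  set c := -(d k m) with hc
  have hc0 : 0 < c := by simp only [hc]; linarith
  have hmono : ∀ j, m ≤ j → d k j ≤ -c := by
    intro j hj
    obtain ⟨s, rfl⟩ : ∃ s, j = m + s := ⟨j - m, by omega⟩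
    clear hj
    induction s with
    | zero => simp [hc]
    | succ s ih =>
      have := hrec k (m + s)
      have := hnext (m + s)
      have : m + (s + 1) = (m + s) + 1 := by omega
      rw [this]
      have := hrec k (m + s)
      have := hnext (m + s)
      linarith
  have Q : ∀ i, 2 * i ≤ k → ∃ N, ∀ j, N ≤ j → d (k - 2 * i) j ≤ -c := by
    intro i
    induction i with
    | zero => intro _; exact ⟨m, by simpa using hmono⟩
    | succ i ih =>
      intro h2i
      obtain ⟨N, hN⟩ := ih (by omega)
      set l := k - 2 * i with hl
      have hl2 : 2 ≤ l := by omega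
      have hdv : ∀ j, d (l - 1) j - d (l - 1) (j + 1) = d l j := by
        intro j
        have := hrec (l - 1) j
        rw [show l - 1 + 1 = l from by omega] at this
        linarith
      obtain ⟨M, hM⟩ := grow_aux (d (l - 1)) (d l) hdv c hc0 N hN c
      have hdw : ∀ j, (fun j => -d (l - 2) j) j - (fun j => -d (l - 2) j) (j + 1)
          = (fun j => -d (l - 1) j) j := by
        intro j
        have := hrec (l - 2) j
        rw [show l - 2 + 1 = l - 1 from by omega] at this
        simp only
        linarith
      obtain ⟨M', hM'⟩ := grow_aux (fun j => -d (l - 2) j) (fun j => -d (l - 1) j) hdw c hc0 M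
        (fun j hj => by simp only [neg_le]; linarith [hM j hj]) c
      refine ⟨M', fun j hj => ?_⟩
      have := hM' j hj
      rw [show k - 2 * (i + 1) = l - 2 from by omega]
      linarith
  obtain ⟨N, hN⟩ := Q (k / 2) (by omega)
  have hval := hN N le_rfl
  rw [show k - 2 * (k / 2) = k % 2 from by omega] at hval
  rcases Nat.mod_two_eq_zero_or_one k with h | h <;> rw [h] at hval
  · linarith [h0 N]
  · linarith [h1 N]

/-- The finite-difference squeeze for real double sequences. -/
lemma seq_pos (d : ℕ → ℕ → ℝ) (hrec : ∀ k m, d (k+1) m = d k m - d k (m+1))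
    (h0 : ∀ m, 0 ≤ d 0 m) (h1 : ∀ m, 0 ≤ d 1 m)
    (n : ℕ) (hn : ∀ m, 0 ≤ d n m) :
    ∀ k, k ≤ n → ∀ m, 0 ≤ d k m := by
  have key : ∀ i, ∀ m, 0 ≤ d (n - i) m := by
    intro i
    induction i with
    | zero => simpa using hn
    | succ i ih =>
      rcases Nat.lt_or_ge i n with hlt | hge
      · rcases Nat.eq_zero_or_pos (n - (i + 1)) with h | h
        · rw [h]; exact h0
        · refine step_aux d hrec h0 h1 (n - (i+1)) h ?_
          rw [show n - (i+1) + 1 = n - i from by omega]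
          exact ih
      · rw [show n - (i + 1) = 0 from by omega]
        exact h0
  intro k hkn
  have := key (n - k)
  rwa [show n - (n - k) = k from by omega] at this

/-- Binomial recurrence for alternating sums in any `ℂ`-module. -/
lemma binom_key {M : Type*} [AddCommGroup M] [Module ℂ M] (b : ℕ → M) (k : ℕ) :
    ∑ j ∈ Finset.range (k + 2), ((-1 : ℂ) ^ j * ((k + 1).choose j : ℂ)) • b j
    = ∑ j ∈ Finset.range (k + 1), ((-1 : ℂ) ^ j * (k.choose j : ℂ)) • b j
      - ∑ j ∈ Finset.range (k + 1), ((-1 : ℂ) ^ j * (k.choose j : ℂ)) • b (j + 1) := by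
  have hz : (∑ j ∈ Finset.range (k + 2), ((-1 : ℂ) ^ j * (k.choose j : ℂ)) • b j)
      = ∑ j ∈ Finset.range (k + 1), ((-1 : ℂ) ^ j * (k.choose j : ℂ)) • b j := by
    rw [Finset.sum_range_succ]
    simp [Nat.choose_eq_zero_of_lt]
  rw [← hz,
    Finset.sum_range_succ' (fun j => ((-1 : ℂ) ^ j * ((k + 1).choose j : ℂ)) • b j),
    Finset.sum_range_succ' (fun j => ((-1 : ℂ) ^ j * (k.choose j : ℂ)) • b j)]
  have hterm : ∀ j, ((-1 : ℂ) ^ (j + 1) * ((k + 1).choose (j + 1) : ℂ)) • b (j + 1)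
      = ((-1 : ℂ) ^ (j + 1) * (k.choose (j + 1) : ℂ)) • b (j + 1)
        - ((-1 : ℂ) ^ j * (k.choose j : ℂ)) • b (j + 1) := by
    intro j
    rw [Nat.choose_succ_succ, ← sub_smul]
    congr 1
    push_cast
    ring
  simp only [hterm]
  rw [Finset.sum_sub_distrib]
  simp
  abel

end ScalarLemmas

section GammaLemmas

variable {X : Type*} [NormedAddCommGroup X] [InnerProductSpace ℂ X] [CompleteSpace X]

lemma gamma_zero (A H : X →L[ℂ] X) : Gamma A H 0 = H := by
  simp [Gamma, ContinuousLinearMap.one_def]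

lemma gamma_one (A H : X →L[ℂ] X) : Gamma A H 1 = H - adjoint A ∘L H ∘L A := by
  simp [Gamma, Finset.sum_range_succ, sub_eq_add_neg, ContinuousLinearMap.one_def]

lemma gamma_succ (A H : X →L[ℂ] X) (k : ℕ) :
    Gamma A H (k + 1) = Gamma A H k - adjoint A ∘L Gamma A H k ∘L A := by
  have hcomp : adjoint A ∘L Gamma A H k ∘L A
      = ∑ j ∈ Finset.range (k + 1), ((-1 : ℂ) ^ j * (Nat.choose k j : ℂ)) •
          (((adjoint A) ^ (j + 1)) ∘L H ∘L (A ^ (j + 1))) := by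
    show adjoint A * (Gamma A H k * A) = _
    unfold Gamma
    rw [Finset.sum_mul, Finset.mul_sum]
    refine Finset.sum_congr rfl fun j _ => ?_
    rw [smul_mul_assoc, mul_smul_comm]
    congr 1
    show adjoint A * (adjoint A ^ j * (H * A ^ j) * A) = adjoint A ^ (j+1) * (H * A ^ (j+1))
    rw [pow_succ' (adjoint A), pow_succ A]
    simp [mul_assoc]
  rw [hcomp]
  unfold Gamma
  rw [show k + 1 + 1 = k + 2 from rfl]
  exact binom_key (fun j => ((adjoint A) ^ j) ∘L H ∘L (A ^ j)) k

lemma gamma_sa (A H : X →L[ℂ] X) (hH : IsSelfAdjoint H) (k : ℕ) :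
    IsSelfAdjoint (Gamma A H k) := by
  unfold Gamma
  rw [IsSelfAdjoint, star_sum]
  refine Finset.sum_congr rfl fun j _ => ?_
  have h1 : ((adjoint A) ^ j) ∘L H ∘L (A ^ j) = star A ^ j * (H * A ^ j) := by
    rw [star_eq_adjoint]; rfl
  rw [h1]
  simp [star_smul, star_mul, star_pow, hH.star_eq, mul_assoc, mul_comm]

end GammaLemmas

/-- The squeeze theorem: `H ≥ A*HA ≥ 0` and `Γ_{n,A}[H] ≥ 0` imply
`Γ_{k,A}[H] ≥ 0` for `k = 1, …, n-1`. -/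
theorem stmt_8 {X : Type*} [NormedAddCommGroup X] [InnerProductSpace ℂ X] [CompleteSpace X]
    (n : ℕ) (hn : 3 ≤ n) (A H : X →L[ℂ] X)
    (h1 : (H - adjoint A ∘L H ∘L A).IsPositive)
    (h2 : (adjoint A ∘L H ∘L A).IsPositive)
    (h3 : (Gamma A H n).IsPositive) :
    ∀ k, 1 ≤ k → k ≤ n - 1 → (Gamma A H k).IsPositive := by
  intro k hk1 hkn
  have hHpos : IsPositive H := by
    have := h1.add h2
    simpa using this
  have hH : IsSelfAdjoint H := hHpos.isSelfAdjoint
  constructor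
  · exact ContinuousLinearMap.isSelfAdjoint_iff_isSymmetric.mp (gamma_sa A H hH k)
  · intro x
    set d : ℕ → ℕ → ℝ := fun k m => (Gamma A H k).reApplyInnerSelf ((A ^ m) x) with hd
    have hrec : ∀ k m, d (k+1) m = d k m - d k (m+1) := by
      intro k m
      have hA : (A ^ (m+1)) x = A ((A ^ m) x) := by
        rw [pow_succ' A]; rfl
      simp only [hd, reApplyInnerSelf, gamma_succ, ContinuousLinearMap.sub_apply,
        inner_sub_left, map_sub, ContinuousLinearMap.comp_apply, adjoint_inner_left, hA]
    have hd0 : ∀ m, 0 ≤ d 0 m := by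
      intro m
      simp only [hd, gamma_zero]
      exact hHpos.2 _
    have hd1 : ∀ m, 0 ≤ d 1 m := by
      intro m
      simp only [hd, gamma_one]
      exact h1.2 _
    have hdn : ∀ m, 0 ≤ d n m := fun m => h3.2 _
    have := seq_pos d hrec hd0 hd1 n hdn k (by omega) 0
    simpa [hd] using this
end

section
/- Let X, Y be Hilbert spaces and (C,A) an n-output stable pair, so that G_m := Σ_{j=0}^{∞} C(m+j-1, j) A^{*j} C*C A^j converges strongly for m = n. Then G_m converges strongly for all 1 ≤ m ≤ n, and G_m - A* G_m A = G_{m-1} for m = 1, …, n, where G_0 := C*C. -/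
open ContinuousLinearMap Filter

private noncomputable def obsS {X Y : Type*} [NormedAddCommGroup X] [InnerProductSpace ℂ X]
    [CompleteSpace X] [NormedAddCommGroup Y] [InnerProductSpace ℂ Y] [CompleteSpace Y]
    (A : X →L[ℂ] X) (C : X →L[ℂ] Y) (m N : ℕ) (x : X) : X :=
  ∑ j ∈ Finset.range N,
    (Nat.choose (m + j - 1) j : ℂ) •
      ((((adjoint A) ^ j) ∘L (adjoint C ∘L C) ∘L (A ^ j)) x)

private noncomputable def obsF {X : Type*} [NormedAddCommGroup X] [InnerProductSpace ℂ X]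
    [CompleteSpace X] (A : X →L[ℂ] X) (G0 : X →L[ℂ] X) : ℕ → (X →L[ℂ] X)
  | 0 => G0
  | (k+1) => obsF A G0 k - adjoint A ∘L obsF A G0 k ∘L A

private lemma obsT_shift {X Y : Type*} [NormedAddCommGroup X] [InnerProductSpace ℂ X]
    [CompleteSpace X] [NormedAddCommGroup Y] [InnerProductSpace ℂ Y] [CompleteSpace Y]
    (A : X →L[ℂ] X) (C : X →L[ℂ] Y) (j : ℕ) (y : X) :
    adjoint A ((((adjoint A) ^ j) ∘L (adjoint C ∘L C) ∘L (A ^ j)) (A y)) =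
      (((adjoint A) ^ (j+1)) ∘L (adjoint C ∘L C) ∘L (A ^ (j+1))) y := by
  rw [pow_succ A j, pow_succ' (adjoint A) j]
  simp [comp_apply, mul_apply]

private lemma obsS_succ {X Y : Type*} [NormedAddCommGroup X] [InnerProductSpace ℂ X]
    [CompleteSpace X] [NormedAddCommGroup Y] [InnerProductSpace ℂ Y] [CompleteSpace Y]
    (A : X →L[ℂ] X) (C : X →L[ℂ] Y) (m N : ℕ) (x : X) :
    obsS A C m (N+1) x = obsS A C m N x + ((m + N - 1).choose N : ℂ) •
      ((((adjoint A) ^ N) ∘L (adjoint C ∘L C) ∘L (A ^ N)) x) := by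
  simp only [obsS, Finset.sum_range_succ]

private lemma obsS_shift {X Y : Type*} [NormedAddCommGroup X] [InnerProductSpace ℂ X]
    [CompleteSpace X] [NormedAddCommGroup Y] [InnerProductSpace ℂ Y] [CompleteSpace Y]
    (A : X →L[ℂ] X) (C : X →L[ℂ] Y) (m M : ℕ) (x : X) :
    obsS A C (m+1) (M+1) x = obsS A C m (M+1) x + adjoint A (obsS A C (m+1) M (A x)) := by
  induction M with
  | zero => simp [obsS]
  | succ M ih =>
      have e1 : m + 1 + (M + 1) - 1 = m + M + 1 := by omega
      have e2 : m + (M + 1) - 1 = m + M := by omega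
      have e3 : m + 1 + M - 1 = m + M := by omega
      have hc : ((m + M + 1).choose (M+1) : ℂ) =
          ((m + M).choose (M+1) : ℂ) + ((m + M).choose M : ℂ) := by
        rw [Nat.choose_succ_succ (m + M) M]
        push_cast
        ring
      calc obsS A C (m+1) (M+1+1) x
          = obsS A C (m+1) (M+1) x + ((m + M + 1).choose (M+1) : ℂ) •
            ((((adjoint A) ^ (M+1)) ∘L (adjoint C ∘L C) ∘L (A ^ (M+1))) x) := by
            rw [obsS_succ, e1]
        _ = (obsS A C m (M+1) x + adjoint A (obsS A C (m+1) M (A x))) +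
            (((m + M).choose (M+1) : ℂ) + ((m + M).choose M : ℂ)) •
            ((((adjoint A) ^ (M+1)) ∘L (adjoint C ∘L C) ∘L (A ^ (M+1))) x) := by
            rw [ih, hc]
        _ = obsS A C m (M+1+1) x + adjoint A (obsS A C (m+1) (M+1) (A x)) := by
            rw [obsS_succ A C m (M+1) x, e2, obsS_succ A C (m+1) M (A x), e3,
              map_add, map_smul, obsT_shift, add_smul]
            abel

private lemma obsS_zero {X Y : Type*} [NormedAddCommGroup X] [InnerProductSpace ℂ X]
    [CompleteSpace X] [NormedAddCommGroup Y] [InnerProductSpace ℂ Y] [CompleteSpace Y]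
    (A : X →L[ℂ] X) (C : X →L[ℂ] Y) (N : ℕ) (hN : 1 ≤ N) (x : X) :
    obsS A C 0 N x = (adjoint C ∘L C) x := by
  rw [obsS, Finset.sum_eq_single 0]
  · simp
  · intro j hj hj0
    have : 0 + j - 1 < j := by omega
    rw [Nat.choose_eq_zero_of_lt this]
    simp
  · intro h
    exact absurd (Finset.mem_range.mpr (by omega)) h

private lemma obs_conv {X Y : Type*} [NormedAddCommGroup X] [InnerProductSpace ℂ X]
    [CompleteSpace X] [NormedAddCommGroup Y] [InnerProductSpace ℂ Y] [CompleteSpace Y]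
    (A : X →L[ℂ] X) (C : X →L[ℂ] Y) (Gn : X →L[ℂ] X) (n : ℕ)
    (hGn : ∀ x, Tendsto (fun N => obsS A C n N x) atTop (nhds (Gn x))) :
    ∀ k, k ≤ n → ∀ x, Tendsto (fun N => obsS A C (n - k) N x) atTop
      (nhds (obsF A Gn k x)) := by
  intro k
  induction k with
  | zero => simpa [obsF] using hGn
  | succ k ih =>
      intro hk x
      have hk' : k ≤ n := by omega
      have hm : n - k = (n - (k+1)) + 1 := by omega
      set m := n - (k+1) with hmdef
      have h1 : Tendsto (fun N => obsS A C (m+1) N x) atTop (nhds (obsF A Gn k x)) := by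
        rw [← hm]; exact ih hk' x
      have h2 : Tendsto (fun N => obsS A C (m+1) (N - 1) (A x)) atTop
          (nhds (obsF A Gn k (A x))) := by
        have := ih hk' (A x)
        rw [hm] at this
        exact this.comp (tendsto_sub_atTop_nat 1)
      have h3 : Tendsto (fun N => adjoint A (obsS A C (m+1) (N - 1) (A x))) atTop
          (nhds (adjoint A (obsF A Gn k (A x)))) :=
        ((adjoint A).continuous.tendsto _).comp h2
      have h4 := h1.sub h3
      have heq : obsF A Gn (k+1) x = obsF A Gn k x - adjoint A (obsF A Gn k (A x)) := by
        simp [obsF, sub_apply, comp_apply]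
      rw [heq]
      refine h4.congr' ?_
      filter_upwards [eventually_ge_atTop 1] with N hN
      have hNM : N - 1 + 1 = N := Nat.succ_pred_eq_of_pos hN
      have := obsS_shift A C m (N - 1) x
      rw [hNM] at this
      rw [this]
      abel

/-- If the `n`-observability gramian of `(C,A)` converges strongly, then so do all the
`m`-gramians for `1 ≤ m ≤ n`, and they satisfy the Stein identities
`G_m - A* G_m A = G_{m-1}` with `G_0 = C*C`. -/
theorem stmt_10 {X Y : Type*} [NormedAddCommGroup X] [InnerProductSpace ℂ X] [CompleteSpace X]
    [NormedAddCommGroup Y] [InnerProductSpace ℂ Y] [CompleteSpace Y]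
    (n : ℕ) (hn : 1 ≤ n) (A : X →L[ℂ] X) (C : X →L[ℂ] Y)
    (hGn : ∃ Gn : X →L[ℂ] X, ∀ x, Tendsto
      (fun N => ∑ j ∈ Finset.range N,
        (Nat.choose (n + j - 1) j : ℂ) •
          ((((adjoint A) ^ j) ∘L (adjoint C ∘L C) ∘L (A ^ j)) x))
      atTop (nhds (Gn x))) :
    ∃ G : ℕ → (X →L[ℂ] X),
      G 0 = adjoint C ∘L C ∧
      (∀ m, 1 ≤ m → m ≤ n → ∀ x, Tendsto
        (fun N => ∑ j ∈ Finset.range N,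
          (Nat.choose (m + j - 1) j : ℂ) •
            ((((adjoint A) ^ j) ∘L (adjoint C ∘L C) ∘L (A ^ j)) x))
        atTop (nhds (G m x))) ∧
      (∀ m, 1 ≤ m → m ≤ n → G m - adjoint A ∘L G m ∘L A = G (m - 1)) := by
  obtain ⟨Gn, hGn⟩ := hGn
  have hGn' : ∀ x, Tendsto (fun N => obsS A C n N x) atTop (nhds (Gn x)) := hGn
  have hconv := obs_conv A C Gn n hGn'
  -- F n = C* C
  have hFn : obsF A Gn n = adjoint C ∘L C := by
    ext x
    have h := hconv n le_rfl x
    rw [Nat.sub_self] at h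
    have h0 : Tendsto (fun N => obsS A C 0 N x) atTop (nhds ((adjoint C ∘L C) x)) := by
      refine tendsto_const_nhds.congr' ?_
      filter_upwards [eventually_ge_atTop 1] with N hN
      exact (obsS_zero A C N hN x).symm
    exact tendsto_nhds_unique h h0
  refine ⟨fun m => if m = 0 then adjoint C ∘L C else obsF A Gn (n - m), if_pos rfl, ?_, ?_⟩
  · intro m h1 h2 x
    have hne : m ≠ 0 := by omega
    simp only [if_neg hne]
    have h := hconv (n - m) (by omega) x
    rw [show n - (n - m) = m by omega] at h
    exact h
  · intro m h1 h2
    have hne : m ≠ 0 := by omega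
    simp only [if_neg hne]
    have key : (if m - 1 = 0 then adjoint C ∘L C else obsF A Gn (n - (m - 1))) =
        obsF A Gn ((n - m) + 1) := by
      by_cases hm1 : m = 1
      · subst hm1
        rw [if_pos rfl, show n - 1 + 1 = n by omega, hFn]
      · rw [if_neg (by omega), show n - (m - 1) = (n - m) + 1 by omega]
    rw [key]
    rfl
end

section
/- On the weighted Bergman space A_n(Y) with weights μ_{n,j} = 1/C(j+n-1, j), the evaluation operator E: f ↦ f(0) and A = S_n* (the adjoint of multiplication by z) form an n-isometric pair: Σ_{j=0}^{n} (-1)^j C(n,j) ‖S_n^{*j} f‖² = ‖f(0)‖² for every f ∈ A_n(Y). -/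
open PowerSeries Finset

/-- The weight `μ_{n,j} = 1 / C(j+n-1, j)` of the weighted Bergman space `A_n`. -/
noncomputable def mu (n j : ℕ) : ℝ := 1 / (Nat.choose (j + n - 1) j : ℝ)

lemma coeff_one_sub_pow (n j : ℕ) :
    PowerSeries.coeff (R := ℝ) j ((1 - PowerSeries.X) ^ n) = (-1 : ℝ) ^ j * (n.choose j : ℝ) := by
  have hp : ((1 - Polynomial.X : Polynomial ℝ)) ^ n
      = Polynomial.C ((-1 : ℝ) ^ n) * (Polynomial.X + Polynomial.C (-1)) ^ n := by
    rw [map_pow, ← mul_pow]; congr 1; simp [Polynomial.C_neg]; ring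
  have hc : ((1 - Polynomial.X : Polynomial ℝ) ^ n).coeff j
      = (-1 : ℝ) ^ j * (n.choose j : ℝ) := by
    rw [hp, Polynomial.coeff_C_mul, Polynomial.coeff_X_add_C_pow]
    rcases le_or_gt j n with h | h
    · have : (-1 : ℝ) ^ n * (-1 : ℝ) ^ (n - j) = (-1 : ℝ) ^ j := by
        rw [← pow_add]
        have h2 : n + (n - j) = 2 * (n - j) + j := by omega
        rw [h2, pow_add, pow_mul]; norm_num
      rw [← mul_assoc, this]
    · rw [Nat.choose_eq_zero_of_lt h]; simp
  have hps : ((1 - PowerSeries.X : ℝ⟦X⟧)) ^ n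
      = (((1 - Polynomial.X : Polynomial ℝ) ^ n : Polynomial ℝ) : ℝ⟦X⟧) := by
    push_cast
    simp [Polynomial.coe_sub]
  rw [hps, Polynomial.coeff_coe, hc]

lemma key_sum (n k : ℕ) (hn : 1 ≤ n) (hk : 1 ≤ k) :
    ∑ j ∈ Finset.range (n + 1), (-1 : ℝ) ^ j * (n.choose j : ℝ) *
      (if j ≤ k then ((k - j + n - 1).choose (k - j) : ℝ) else 0) = 0 := by
  have h1 : ((1 - PowerSeries.X : ℝ⟦X⟧)) ^ n * (invOneSubPow ℝ n).val = 1 := by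
    rw [← invOneSubPow_inv_eq_one_sub_pow]
    exact (invOneSubPow ℝ n).inv_val
  have h2 := congrArg (PowerSeries.coeff (R := ℝ) k) h1
  rw [PowerSeries.coeff_mul, PowerSeries.coeff_one,
    Finset.Nat.sum_antidiagonal_eq_sum_range_succ_mk, if_neg (by omega),
    invOneSubPow_val_eq_mk_sub_one_add_choose_of_pos ℝ n hn] at h2
  simp only [PowerSeries.coeff_mk, coeff_one_sub_pow] at h2
  set F : ℕ → ℝ := fun j => (-1 : ℝ) ^ j * (n.choose j : ℝ) *
      (if j ≤ k then ((k - j + n - 1).choose (k - j) : ℝ) else 0) with hF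
  have hFval : ∀ j ≤ k, F j = (-1 : ℝ) ^ j * (n.choose j : ℝ)
      * (((n - 1 + (k - j)).choose (n - 1) : ℝ)) := by
    intro j hj
    have e1 : k - j + n - 1 = n - 1 + (k - j) := by omega
    have e2 : (n - 1 + (k - j)).choose (k - j) = (n - 1 + (k - j)).choose (n - 1) := by
      have := Nat.choose_symm (n := n - 1 + (k - j)) (k := k - j) (by omega)
      rw [show n - 1 + (k - j) - (k - j) = n - 1 by omega] at this
      exact this.symm
    simp only [hF, if_pos hj, e1, e2]
  have hsum1 : ∑ j ∈ Finset.range (k + 1), F j = 0 := by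
    rw [← h2]
    exact Finset.sum_congr rfl fun j hj =>
      hFval j (by simpa using Nat.lt_succ_iff.mp (Finset.mem_range.mp hj))
  have hFn : ∀ j, n < j → F j = 0 := fun j hj => by
    simp [hF, Nat.choose_eq_zero_of_lt hj]
  have hFk : ∀ j, k < j → F j = 0 := fun j hj => by
    simp [hF, if_neg (by omega : ¬ j ≤ k)]
  have hext : ∀ m, (n ≤ m ∧ k ≤ m) → ∑ j ∈ Finset.range (m + 1), F j = 0 := by
    intro m ⟨hm1, hm2⟩
    rw [← hsum1]
    symm
    apply Finset.sum_subset (Finset.range_subset_range.mpr (by omega))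
    intro j _ hj
    exact hFk j (by simpa using hj)
  calc ∑ j ∈ Finset.range (n + 1), F j
      = ∑ j ∈ Finset.range (max n k + 1), F j := by
        apply Finset.sum_subset (Finset.range_subset_range.mpr (by omega))
        intro j _ hj
        exact hFn j (by simpa using hj)
    _ = 0 := hext _ ⟨le_max_left _ _, le_max_right _ _⟩

lemma choose_mu_pos (n m : ℕ) (hn : 1 ≤ n) : (0:ℝ) < (Nat.choose (m + n - 1) m : ℝ) := by
  exact_mod_cast Nat.choose_pos (by omega)

lemma mu_pos (n m : ℕ) (hn : 1 ≤ n) : 0 < mu n m := by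
  unfold mu
  exact div_pos one_pos (choose_mu_pos n m hn)

lemma mu_anti (n m j : ℕ) (hn : 1 ≤ n) : mu n (m + j) ≤ mu n m := by
  unfold mu
  apply one_div_le_one_div_of_le (choose_mu_pos n m hn)
  have e1 : (m + n - 1).choose m = (m + n - 1).choose (n - 1) := by
    have := Nat.choose_symm (n := m + n - 1) (k := m) (by omega)
    rw [show m + n - 1 - m = n - 1 by omega] at this
    exact this.symm
  have e2 : (m + j + n - 1).choose (m + j) = (m + j + n - 1).choose (n - 1) := by
    have := Nat.choose_symm (n := m + j + n - 1) (k := m + j) (by omega)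
    rw [show m + j + n - 1 - (m + j) = n - 1 by omega] at this
    exact this.symm
  rw [e1, e2]
  exact_mod_cast Nat.choose_le_choose (n - 1) (by omega : m + n - 1 ≤ m + j + n - 1)

/-- The model pair `(E, S_n*)` on the weighted Bergman space `A_n(Y)` is `n`-isometric:
`Σ_{j=0}^n (-1)^j C(n,j) ‖S_n^{*j} f‖² = ‖f(0)‖²`, where `(S_n^{*j} f)_m =
(μ_{n,m+j}/μ_{n,m}) f_{m+j}` and `‖g‖² = Σ_m μ_{n,m}‖g_m‖²`. -/
theorem stmt_14 {Y : Type*} [NormedAddCommGroup Y] [InnerProductSpace ℂ Y] [CompleteSpace Y]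
    (n : ℕ) (hn : 1 ≤ n) (f : ℕ → Y)
    (hf : Summable fun j => mu n j * ‖f j‖ ^ 2) :
    ∑ j ∈ Finset.range (n + 1), (-1 : ℝ) ^ j * (Nat.choose n j : ℝ) *
        (∑' m : ℕ, mu n m * ‖(mu n (m + j) / mu n m) • f (m + j)‖ ^ 2)
      = ‖f 0‖ ^ 2 := by
  set a : ℕ → ℝ := fun m => ‖f m‖ ^ 2 with ha
  have ha_nonneg : ∀ m, 0 ≤ a m := fun m => by positivity
  set g : ℕ → ℕ → ℝ := fun j m => mu n (m + j) ^ 2 / mu n m * a (m + j) with hg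
  -- Step A: each summand equals g j m
  have hA : ∀ j m, mu n m * ‖(mu n (m + j) / mu n m) • f (m + j)‖ ^ 2 = g j m := by
    intro j m
    have hm := mu_pos n m hn
    have hmj := mu_pos n (m + j) hn
    rw [norm_smul, Real.norm_eq_abs, abs_of_pos (div_pos hmj hm), mul_pow]
    simp only [hg]
    field_simp
    ring
  -- Summability of g j
  have hgsum : ∀ j, Summable (g j) := by
    intro j
    apply Summable.of_nonneg_of_le (fun m => by
      have := mu_pos n (m + j) hn
      have := mu_pos n m hn
      positivity)
      (fun m => ?_) ((summable_nat_add_iff j).mpr hf)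
    have hm := mu_pos n m hn
    have hmj := mu_pos n (m + j) hn
    have h1 : mu n (m + j) ^ 2 / mu n m ≤ mu n (m + j) := by
      rw [div_le_iff₀ hm, pow_two]
      exact mul_le_mul_of_nonneg_left (mu_anti n m j hn) hmj.le
    exact mul_le_mul_of_nonneg_right h1 (ha_nonneg _)
  -- h j k : reindexed version
  set h : ℕ → ℕ → ℝ := fun j k => if j ≤ k then mu n k ^ 2 / mu n (k - j) * a k else 0 with hh
  have hinj : ∀ j : ℕ, Function.Injective (fun m : ℕ => m + j) := fun j => add_left_injective j
  have hrange : ∀ j x, x ∉ Set.range (fun m : ℕ => m + j) → h j x = 0 := by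
    intro j x hx
    rw [hh]
    dsimp only
    rw [if_neg]
    intro hle
    exact hx ⟨x - j, by dsimp only; omega⟩
  have hsupp : ∀ j : ℕ, Function.support (h j) ⊆ Set.range (fun m : ℕ => m + j) := by
    intro j x hx
    by_contra hmem
    exact hx (hrange j x hmem)
  have hcomp : ∀ j m, h j (m + j) = g j m := by
    intro j m
    simp only [hh, hg, if_pos (Nat.le_add_left j m)]
    rw [show m + j - j = m from by omega]
  have htsum : ∀ j, ∑' m, g j m = ∑' k, h j k := by
    intro j
    have heq := (hinj j).tsum_eq (f := h j) (hsupp j)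
    rw [← heq]
    exact tsum_congr fun m => (hcomp j m).symm
  have hhsum : ∀ j, Summable (h j) := by
    intro j
    rw [← Function.Injective.summable_iff (hinj j) (hrange j)]
    exact (hgsum j).congr fun m => (hcomp j m).symm
  -- pointwise column sums
  have hcol : ∀ k, (∑ j ∈ Finset.range (n + 1),
      (-1 : ℝ) ^ j * (n.choose j : ℝ) * h j k) = if k = 0 then a 0 else 0 := by
    intro k
    rcases Nat.eq_zero_or_pos k with rfl | hk
    · rw [if_pos rfl]
      rw [Finset.sum_eq_single 0]
      · have h00 : h 0 0 = a 0 := by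
          have h0 : mu n 0 = 1 := by simp [mu]
          simp [hh, h0]
        simp [h00]
      · intro j hj hj0
        have : h j 0 = 0 := by
          rw [hh]; dsimp only; rw [if_neg (by omega)]
        simp [this]
      · intro hmem
        exact absurd (Finset.mem_range.mpr (by omega)) hmem
    · rw [if_neg (by omega)]
      have hterm : ∀ j, (-1 : ℝ) ^ j * (n.choose j : ℝ) * h j k
          = (mu n k ^ 2 * a k) * ((-1 : ℝ) ^ j * (n.choose j : ℝ) *
            (if j ≤ k then ((k - j + n - 1).choose (k - j) : ℝ) else 0)) := by
        intro j
        rw [hh]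
        dsimp only
        by_cases hjk : j ≤ k
        · rw [if_pos hjk, if_pos hjk]
          have : mu n (k - j) = 1 / ((k - j + n - 1).choose (k - j) : ℝ) := rfl
          rw [this]
          have hc := choose_mu_pos n (k - j) hn
          field_simp
        · rw [if_neg hjk, if_neg hjk]
          ring
      calc ∑ j ∈ Finset.range (n + 1), (-1 : ℝ) ^ j * (n.choose j : ℝ) * h j k
          = (mu n k ^ 2 * a k) * ∑ j ∈ Finset.range (n + 1), ((-1 : ℝ) ^ j * (n.choose j : ℝ) *
            (if j ≤ k then ((k - j + n - 1).choose (k - j) : ℝ) else 0)) := by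
            rw [Finset.mul_sum]
            exact Finset.sum_congr rfl fun j _ => hterm j
        _ = 0 := by rw [key_sum n k hn hk]; ring
  -- put it together
  calc ∑ j ∈ Finset.range (n + 1), (-1 : ℝ) ^ j * (Nat.choose n j : ℝ) *
        (∑' m : ℕ, mu n m * ‖(mu n (m + j) / mu n m) • f (m + j)‖ ^ 2)
      = ∑ j ∈ Finset.range (n + 1), ∑' k, (-1 : ℝ) ^ j * (Nat.choose n j : ℝ) * h j k := by
        refine Finset.sum_congr rfl fun j _ => ?_
        rw [tsum_congr (hA j), htsum j, ← tsum_mul_left]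
    _ = ∑' k, ∑ j ∈ Finset.range (n + 1), (-1 : ℝ) ^ j * (Nat.choose n j : ℝ) * h j k := by
        exact (Summable.tsum_finsetSum fun j _ => (hhsum j).mul_left _).symm
    _ = ∑' k : ℕ, (if k = 0 then a 0 else 0) := tsum_congr hcol
    _ = a 0 := tsum_ite_eq 0 (fun _ => a 0)
    _ = ‖f 0‖ ^ 2 := rfl
end
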